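/- For fixed a ∈ (0,1), the function t ↦ (1 - √(1 - a t)) / (1 - √(1 - t)) is (strictly) decreasing on (0,1]. -/

import Mathlib

open Real Set

theorem stmt_0 (a : ℝ) (ha : 0 < a) (ha1 : a < 1) :
    StrictAntiOn (fun t : ℝ => (1 - Real.sqrt (1 - a * t)) / (1 - Real.sqrt (1 - t)))
      (Set.Ioc 0 1) := by
  have hconv : Convex ℝ (Set.Ioc (0:ℝ) 1) := convex_Ioc 0 1
  apply strictAntiOn_of_deriv_neg hconv
  · apply ContinuousOn.div
    · fun_prop
    · fun_prop
    · intro x hx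
      have h1 : Real.sqrt (1 - x) < 1 := by
        calc Real.sqrt (1 - x) < Real.sqrt 1 :=
              Real.sqrt_lt_sqrt (by linarith [hx.1, hx.2]) (by linarith [hx.1])
          _ = 1 := by simp
      linarith
  · intro x hx
    rw [interior_Ioc] at hx
    obtain ⟨hx0, hx1⟩ := hx
    set u := Real.sqrt (1 - x) with hu
    set v := Real.sqrt (1 - a * x) with hv
    have hax : a * x < x := by nlinarith
    have h1x : (0:ℝ) < 1 - x := by linarith
    have h1ax : (0:ℝ) < 1 - a * x := by nlinarith
    have hu0 : 0 < u := Real.sqrt_pos.mpr h1x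
    have hv0 : 0 < v := Real.sqrt_pos.mpr h1ax
    have hu2 : u ^ 2 = 1 - x := Real.sq_sqrt h1x.le
    have hv2 : v ^ 2 = 1 - a * x := Real.sq_sqrt h1ax.le
    have hu1 : u < 1 := by nlinarith
    have hv1 : v < 1 := by nlinarith
    have huv : u < v := by nlinarith
    have hD : (0:ℝ) < 1 - u := by linarith
    -- derivative of numerator
    have hN : HasDerivAt (fun t : ℝ => 1 - Real.sqrt (1 - a * t)) (a / (2 * v)) x := by
      have h1 : HasDerivAt (fun t : ℝ => 1 - a * t) (-a) x := by
        simpa using ((hasDerivAt_id x).const_mul a).const_sub 1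
      have h2 := (Real.hasDerivAt_sqrt (ne_of_gt h1ax)).comp x h1
      have h3 := h2.const_sub 1
      refine h3.congr_deriv ?_
      rw [hv]; field_simp
    have hDd : HasDerivAt (fun t : ℝ => 1 - Real.sqrt (1 - t)) (1 / (2 * u)) x := by
      have h1 : HasDerivAt (fun t : ℝ => 1 - t) (-1) x := by
        simpa using (hasDerivAt_id x).const_sub 1
      have h2 := (Real.hasDerivAt_sqrt (ne_of_gt h1x)).comp x h1
      have h3 := h2.const_sub 1
      refine h3.congr_deriv ?_
      rw [hu]; ring
    have hdiv := hN.div hDd (by linarith : (1:ℝ) - u ≠ 0)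
    rw [show deriv (fun t : ℝ => (1 - √(1 - a * t)) / (1 - √(1 - t))) x = _ from hdiv.deriv]
    apply div_neg_of_neg_of_pos
    · show a / (2 * v) * (1 - u) - (1 - v) * (1 / (2 * u)) < 0
      have key : a * u * (1 - u) < v * (1 - v) := by
        have e1 : a * u * (1 - u) * ((1 + u) * (1 + v)) = a * x * (u + u * v) := by
          linear_combination (-(a * u * (1 + v))) * hu2
        have e2 : v * (1 - v) * ((1 + u) * (1 + v)) = a * x * (v + u * v) := by
          linear_combination (-(v * (1 + u))) * hv2
        have h1 : a * u * (1 - u) * ((1 + u) * (1 + v)) < v * (1 - v) * ((1 + u) * (1 + v)) := by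
          rw [e1, e2]
          exact mul_lt_mul_of_pos_left (by linarith) (by positivity)
        have hpos : (0:ℝ) < (1 + u) * (1 + v) := by positivity
        exact lt_of_mul_lt_mul_right h1 hpos.le
      have heq : a / (2 * v) * (1 - u) - (1 - v) * (1 / (2 * u))
          = (a * u * (1 - u) - v * (1 - v)) / (2 * u * v) := by
        field_simp
      rw [heq]
      exact div_neg_of_neg_of_pos (by linarith) (by positivity)
    · positivity
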